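/- Let r ≥ 2 be an even integer. Then, in the complex numbers, Σ_{n=1}^∞ cot(πni)/n^{2r−1} = (1/2) · (2πi)^{2r−1} · Σ_{m=0}^{r} (−1)^{m+1} · (B_{2m}/(2m)!) · (B_{2(r−m)}/(2(r−m))!), where i is the imaginary unit and B_k denotes the k-th Bernoulli number. -/

import Mathlib

open Complex

noncomputable section CotAux

open Real

/-- value of ζ(2k) -/
def ZV (k : ℕ) : ℝ :=
  (-1 : ℝ) ^ (k + 1) * (2 : ℝ) ^ (2 * k - 1) * π ^ (2 * k) * (bernoulli (2 * k) : ℝ)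
    / (Nat.factorial (2 * k) : ℝ)

lemma Zsum {k : ℕ} (hk : k ≠ 0) :
    HasSum (fun n : ℕ => 1 / ((n : ℝ) + 1) ^ (2 * k)) (ZV k) := by
  have h := hasSum_zeta_nat hk
  have h0 : ∑ i ∈ Finset.range 1, 1 / ((i : ℝ)) ^ (2 * k) = 0 := by
    rw [Finset.range_one, Finset.sum_singleton, Nat.cast_zero, zero_pow (by omega), div_zero]
  have h2 : HasSum (fun n : ℕ => 1 / ((n : ℝ)) ^ (2 * k)) (ZV k + ∑ i ∈ Finset.range 1, 1 / ((i : ℝ)) ^ (2 * k)) := by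
    rw [h0, add_zero]; exact h
  have := (hasSum_nat_add_iff (f := fun n : ℕ => 1 / ((n : ℝ)) ^ (2 * k)) 1).mpr h2
  convert this using 2 with n
  · rfl
  push_cast
  ring


lemma exp_sub_exp_pos {a : ℝ} (ha : 0 < a) :
    0 < Real.exp (π * a) - Real.exp (-(π * a)) := by
  have : -(π * a) < π * a := by nlinarith [Real.pi_pos]
  linarith [Real.exp_lt_exp.mpr this]

/-- Fourier coefficient computation -/
lemma fourier_coeff_cosh (a : ℝ) (ha : 0 < a) (n : ℤ) :
    haveI : Fact (0 < 2 * π) := ⟨by positivity⟩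
    fourierCoeff (AddCircle.liftIco (2 * π) 0
        (fun x : ℝ => Complex.exp (a * (x - π)) + Complex.exp (-(a * (x - π))))) n
      = ((Real.exp (π * a) - Real.exp (-(π * a))) * a / π * (1 / (a ^ 2 + (n : ℝ) ^ 2)) : ℝ) := by
  haveI : Fact (0 < 2 * π) := ⟨by positivity⟩
  set F : ℝ → ℂ := fun x : ℝ => Complex.exp (a * (x - π)) + Complex.exp (-(a * (x - π))) with hF
  rw [fourierCoeff_liftIco_eq]
  rw [fourierCoeffOn_eq_integral]
  have hπ : (π : ℝ) ≠ 0 := Real.pi_ne_zero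
  have hπC : (π : ℂ) ≠ 0 := by exact_mod_cast hπ
  set c₁ : ℂ := (a : ℂ) - n * Complex.I with hc₁
  set c₂ : ℂ := -(a : ℂ) - n * Complex.I with hc₂
  have hc₁0 : c₁ ≠ 0 := by
    intro h
    have : c₁.re = 0 := by rw [h]; simp
    simp [hc₁] at this
    exact ha.ne' this
  have hc₂0 : c₂ ≠ 0 := by
    intro h
    have : c₂.re = 0 := by rw [h]; simp
    simp [hc₂] at this
    exact ha.ne' this
  have key : ∀ x : ℝ, (fourier (-n) (x : AddCircle (0 + 2 * π - 0))) • F x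
      = Complex.exp (-(a * π)) * Complex.exp (c₁ * x)
        + Complex.exp ((a : ℂ) * π) * Complex.exp (c₂ * x) := by
    intro x
    rw [fourier_coe_apply, smul_eq_mul]
    rw [hF]
    simp only []
    rw [mul_add, ← Complex.exp_add, ← Complex.exp_add, ← Complex.exp_add, ← Complex.exp_add]
    congr 1
    · congr 1
      push_cast
      field_simp
      ring
    · congr 1
      push_cast
      field_simp
      ring
  rw [intervalIntegral.integral_congr (g := fun x : ℝ =>
      Complex.exp (-(a * π)) * Complex.exp (c₁ * x) + Complex.exp ((a : ℂ) * π) * Complex.exp (c₂ * x))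
      (fun x _ => key x)]
  rw [intervalIntegral.integral_add
      ((Continuous.intervalIntegrable (by fun_prop) _ _))
      ((Continuous.intervalIntegrable (by fun_prop) _ _))]
  rw [intervalIntegral.integral_const_mul, intervalIntegral.integral_const_mul,
    integral_exp_mul_complex hc₁0, integral_exp_mul_complex hc₂0]
  have e₁ : Complex.exp (c₁ * (2 * π)) = (Real.exp (2 * π * a) : ℝ) := by
    have h : c₁ * (2 * π) = ((2 * π * a : ℝ) : ℂ) + (-n : ℤ) * (2 * π * Complex.I) := by
      push_cast [hc₁]; ring
    rw [h, Complex.exp_add, Complex.exp_int_mul_two_pi_mul_I, mul_one, Complex.ofReal_exp]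
  have e₂ : Complex.exp (c₂ * (2 * π)) = (Real.exp (-(2 * π * a)) : ℝ) := by
    have h : c₂ * (2 * π) = ((-(2 * π * a) : ℝ) : ℂ) + (-n : ℤ) * (2 * π * Complex.I) := by
      push_cast [hc₂]; ring
    rw [h, Complex.exp_add, Complex.exp_int_mul_two_pi_mul_I, mul_one, Complex.ofReal_exp]
  rw [show ((0 + 2 * π : ℝ) : ℂ) = 2 * (π : ℂ) by push_cast; ring, Complex.ofReal_zero]
  simp only [mul_zero, Complex.exp_zero]
  rw [e₁, e₂]
  set u : ℝ := Real.exp (π * a) with hu'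
  have hu : u ≠ 0 := (Real.exp_pos _).ne'
  have h2 : Real.exp (2 * π * a) = u * u := by
    rw [hu', ← Real.exp_add]; ring_nf
  have h3 : Real.exp (-(2 * π * a)) = u⁻¹ * u⁻¹ := by
    rw [hu', ← Real.exp_neg, ← Real.exp_add]; ring_nf
  have h4 : Real.exp (-(π * a)) = u⁻¹ := by rw [hu', Real.exp_neg]
  have haC : Complex.exp (-((a : ℂ) * π)) = ((u⁻¹ : ℝ) : ℂ) := by
    rw [show -((a : ℂ) * π) = ((-(π * a) : ℝ) : ℂ) by push_cast; ring, ← Complex.ofReal_exp, h4]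
  have haC2 : Complex.exp ((a : ℂ) * π) = ((u : ℝ) : ℂ) := by
    rw [show ((a : ℂ) * π) = ((π * a : ℝ) : ℂ) by push_cast; ring, ← Complex.ofReal_exp]
  have hsq : (a ^ 2 + (n : ℝ) ^ 2 : ℝ) ≠ 0 := by positivity
  have hsqC : ((a : ℂ) ^ 2 + (n : ℂ) ^ 2) ≠ 0 := by
    intro h
    apply hsq
    exact_mod_cast congrArg Complex.re h
  have hkey : c₁ * c₂ = -((a : ℂ) ^ 2 + (n : ℂ) ^ 2) := by
    rw [hc₁, hc₂]
    linear_combination ((n : ℂ)) ^ 2 * Complex.I_sq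
  rw [h2, h3, h4, haC, haC2]
  rw [← mul_div_assoc, ← mul_div_assoc]
  have hN1 : ((u⁻¹ : ℝ) : ℂ) * (((u * u : ℝ) : ℂ) - 1) = ((u - u⁻¹ : ℝ) : ℂ) := by
    have huC : (u : ℂ) ≠ 0 := by exact_mod_cast hu
    push_cast
    field_simp
  have hN2 : ((u : ℝ) : ℂ) * (((u⁻¹ * u⁻¹ : ℝ) : ℂ) - 1) = -((u - u⁻¹ : ℝ) : ℂ) := by
    have huC : (u : ℂ) ≠ 0 := by exact_mod_cast hu
    push_cast
    field_simp
    ring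
  rw [hN1, hN2]
  have hT : ((u - u⁻¹ : ℝ) : ℂ) / c₁ + -((u - u⁻¹ : ℝ) : ℂ) / c₂
      = ((u - u⁻¹ : ℝ) : ℂ) * 2 * a / ((a : ℂ) ^ 2 + (n : ℂ) ^ 2) := by
    rw [div_add_div _ _ hc₁0 hc₂0, div_eq_div_iff (mul_ne_zero hc₁0 hc₂0) hsqC]
    rw [hkey, hc₁, hc₂]
    ring
  rw [hT, Complex.real_smul]
  push_cast
  have huC : (u : ℂ) ≠ 0 := by exact_mod_cast hu
  field_simp
  ring

/-- summability over ℕ -/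
lemma summable_inv_sq_add (a : ℝ) (ha : 0 < a) :
    Summable (fun m : ℕ => 1 / (a ^ 2 + (m : ℝ) ^ 2)) := by
  rw [← summable_nat_add_iff 1]
  have hs : Summable (fun n : ℕ => 1 / ((n : ℝ) + 1) ^ 2) := by
    have := (hasSum_zeta_nat one_ne_zero).summable
    rw [← summable_nat_add_iff 1] at this
    convert this using 2 with n
    · rfl
    push_cast
    norm_num
  apply Summable.of_nonneg_of_le (fun n => by positivity) _ hs
  intro n
  apply one_div_le_one_div_of_le (by positivity)
  push_cast
  nlinarith [sq_nonneg a]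

lemma summable_inv_sq_add_int (a : ℝ) (ha : 0 < a) :
    Summable (fun m : ℤ => 1 / (a ^ 2 + (m : ℝ) ^ 2)) := by
  have h := summable_inv_sq_add a ha
  apply Summable.of_nat_of_neg_add_one
  · exact h
  · convert ((summable_nat_add_iff 1).mpr h) using 2 with n
    · rfl
    push_cast
    ring_nf

/-- The key series: Σ_{m ∈ ℤ} 1/(a²+m²) = π coth(π a)/a -/
lemma hasSum_int_inv_sq_add (a : ℝ) (ha : 0 < a) :
    HasSum (fun m : ℤ => 1 / (a ^ 2 + (m : ℝ) ^ 2))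
      (π * (Real.exp (π * a) + Real.exp (-(π * a))) /
        (a * (Real.exp (π * a) - Real.exp (-(π * a))))) := by
  haveI : Fact (0 < 2 * π) := ⟨by positivity⟩
  set F : ℝ → ℂ := fun x : ℝ => Complex.exp (a * (x - π)) + Complex.exp (-(a * (x - π))) with hF
  have hFcont : Continuous F := by fun_prop
  have hFend : F 0 = F (0 + 2 * π) := by
    rw [hF]
    simp only []
    rw [show ((a : ℂ) * ((0 : ℝ) - π)) = -(a * π) by push_cast; ring,
      show ((a : ℂ) * ((0 + 2 * π : ℝ) - π)) = a * π by push_cast; ring]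
    ring
  set f : C(AddCircle (2 * π), ℂ) :=
    ⟨AddCircle.liftIco (2 * π) 0 F, AddCircle.liftIco_continuous hFend hFcont.continuousOn⟩ with hf
  have hcoeff : ∀ n : ℤ, fourierCoeff (⇑f) n
      = (((Real.exp (π * a) - Real.exp (-(π * a))) * a / π * (1 / (a ^ 2 + (n : ℝ) ^ 2)) : ℝ) : ℂ) :=
    fun n => fourier_coeff_cosh a ha n
  have hsumm : Summable (fourierCoeff (⇑f)) := by
    rw [show (fourierCoeff (⇑f)) = fun n : ℤ =>
        (((Real.exp (π * a) - Real.exp (-(π * a))) * a / π * (1 / (a ^ 2 + (n : ℝ) ^ 2)) : ℝ) : ℂ)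
      from funext hcoeff]
    rw [Complex.summable_ofReal]
    exact (summable_inv_sq_add_int a ha).mul_left _
  have hps := has_pointwise_sum_fourier_series_of_summable hsumm (0 : AddCircle (2 * π))
  simp only [fourier_eval_zero, smul_eq_mul, mul_one] at hps
  have hf0 : (⇑f) 0 = ((Real.exp (π * a) + Real.exp (-(π * a)) : ℝ) : ℂ) := by
    have h0 : ((0 : ℝ) : AddCircle (2 * π)) = (0 : AddCircle (2 * π)) := rfl
    rw [hf]
    show AddCircle.liftIco (2 * π) 0 F ((0 : ℝ) : AddCircle (2 * π)) = _
    rw [AddCircle.liftIco_coe_apply (by constructor <;> [rfl; positivity] )]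
    rw [hF]
    simp only []
    push_cast
    rw [show (a : ℂ) * (0 - π) = -((π : ℂ) * a) by ring, neg_neg]
    exact add_comm _ _
  rw [hf0] at hps
  rw [show (fun i => fourierCoeff (⇑f) i) = fun n : ℤ =>
      (((Real.exp (π * a) - Real.exp (-(π * a))) * a / π * (1 / (a ^ 2 + (n : ℝ) ^ 2)) : ℝ) : ℂ)
    from funext hcoeff] at hps
  rw [Complex.hasSum_ofReal] at hps
  set K : ℝ := (Real.exp (π * a) - Real.exp (-(π * a))) * a / π with hK
  have hK0 : K ≠ 0 := by
    have := exp_sub_exp_pos ha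
    rw [hK]
    positivity
  have := hps.div_const K
  have heq : (fun n : ℤ => K * (1 / (a ^ 2 + (n : ℝ) ^ 2)) / K)
      = fun n : ℤ => 1 / (a ^ 2 + (n : ℝ) ^ 2) := by
    funext n
    field_simp
  rw [heq] at this
  convert this using 1
  · rfl
  rw [hK]
  have h1 : π ≠ 0 := Real.pi_ne_zero
  have h2 : a ≠ 0 := ha.ne'
  have h3 := (exp_sub_exp_pos ha).ne'
  field_simp

/-- coth(π a) as an exp expression -/
def CothV (a : ℝ) : ℝ :=
  (Real.exp (π * a) + Real.exp (-(π * a))) / (Real.exp (π * a) - Real.exp (-(π * a)))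

lemma hasSum_nat_inv_sq_add (a : ℝ) (ha : 0 < a) :
    HasSum (fun m : ℕ => 1 / (a ^ 2 + ((m : ℝ) + 1) ^ 2))
      (π * CothV a / (2 * a) - 1 / (2 * a ^ 2)) := by
  have hZ := hasSum_int_inv_sq_add a ha
  have h1 := hZ.nat_add_neg_add_one
  have hg := summable_inv_sq_add a ha
  have hh : Summable (fun m : ℕ => 1 / (a ^ 2 + ((m : ℝ) + 1) ^ 2)) := by
    have := (summable_nat_add_iff 1).mpr hg
    convert this using 2 with n
    · rfl
    push_cast
    ring_nf
  -- rewrite h1 into g n + h n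
  have h1' : HasSum (fun n : ℕ => 1 / (a ^ 2 + (n : ℝ) ^ 2) + 1 / (a ^ 2 + ((n : ℝ) + 1) ^ 2))
      (π * (Real.exp (π * a) + Real.exp (-(π * a))) /
        (a * (Real.exp (π * a) - Real.exp (-(π * a))))) := by
    convert h1 using 2 with n
    push_cast
    ring_nf
  have hsum_eq : (∑' n : ℕ, 1 / (a ^ 2 + (n : ℝ) ^ 2))
      = 1 / a ^ 2 + ∑' n : ℕ, 1 / (a ^ 2 + ((n : ℝ) + 1) ^ 2) := by
    rw [Summable.tsum_eq_zero_add hg]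
    norm_num
  have htot := (hg.hasSum.add hh.hasSum).tsum_eq
  have h1eq := h1'.tsum_eq
  rw [Summable.tsum_add hg hh] at h1eq
  have hval : (∑' m : ℕ, 1 / (a ^ 2 + ((m : ℝ) + 1) ^ 2))
      = π * CothV a / (2 * a) - 1 / (2 * a ^ 2) := by
    have hd := (exp_sub_exp_pos ha).ne'
    have ha2 : a ≠ 0 := ha.ne'
    rw [hsum_eq] at h1eq
    rw [CothV]
    have hπ : π ≠ 0 := Real.pi_ne_zero
    field_simp at h1eq ⊢
    nlinarith [h1eq]
  rw [← hval]
  exact hh.hasSum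

lemma cot_eq_cothV (a : ℝ) (ha : 0 < a) :
    Complex.cot ((π : ℂ) * a * Complex.I) = -Complex.I * (CothV a : ℝ) := by
  have h := Complex.cot_pi_eq_exp_ratio ((a : ℂ) * Complex.I)
  rw [show (π : ℂ) * a * Complex.I = (π : ℂ) * ((a : ℂ) * Complex.I) by ring]
  rw [h]
  have hq : Complex.exp (2 * (π : ℂ) * Complex.I * ((a : ℂ) * Complex.I))
      = ((Real.exp (-(2 * π * a)) : ℝ) : ℂ) := by
    rw [Complex.ofReal_exp,
      show (2 * (π : ℂ) * Complex.I * ((a : ℂ) * Complex.I))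
        = ((2 * π * a : ℝ) : ℂ) * (Complex.I * Complex.I) by push_cast; ring,
      Complex.I_mul_I]
    push_cast
    ring_nf
  rw [hq]
  set u : ℝ := Real.exp (π * a) with hu'
  have hu0 : 0 < u := Real.exp_pos _
  have hu : u ≠ 0 := hu0.ne'
  have h1 : 1 < u := by
    rw [hu', show (1 : ℝ) = Real.exp 0 from (Real.exp_zero).symm]
    exact Real.exp_lt_exp.mpr (by positivity)
  have hq2 : Real.exp (-(2 * π * a)) = u⁻¹ * u⁻¹ := by
    rw [hu', ← Real.exp_neg, ← Real.exp_add]; ring_nf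
  have h4 : Real.exp (-(π * a)) = u⁻¹ := by rw [hu', Real.exp_neg]
  rw [hq2, CothV, h4, ← hu']
  clear_value u
  obtain ⟨v, hv, huv⟩ : ∃ v, u⁻¹ = v ∧ u * v = 1 := ⟨u⁻¹, rfl, mul_inv_cancel₀ hu⟩
  rw [hv]
  have hv1 : v < 1 := by
    rw [← hv, inv_lt_one_iff₀]
    right; exact h1
  have hv0 : 0 < v := by rw [← hv]; positivity
  have huvC : (u : ℂ) * (v : ℂ) = 1 := by exact_mod_cast huv
  have hB : Complex.I * (1 - ((v * v : ℝ) : ℂ)) ≠ 0 := by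
    apply mul_ne_zero Complex.I_ne_zero
    intro hcon
    have : ((1 - v * v : ℝ) : ℂ) = 0 := by push_cast at hcon ⊢; linear_combination hcon
    have : (1 - v * v : ℝ) = 0 := by exact_mod_cast this
    nlinarith
  have hD : ((u - v : ℝ) : ℂ) ≠ 0 := by
    intro hcon
    have : (u - v : ℝ) = 0 := by exact_mod_cast hcon
    nlinarith
  rw [Complex.ofReal_div, mul_div_assoc', div_eq_div_iff hB hD]
  push_cast
  linear_combination ((1 - (v : ℂ) * v) * ((u : ℂ) + v)) * Complex.I_sq + (2 * (v : ℂ)) * huvC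

/-! ### Double sums -/

def G (i k : ℕ) (p : ℕ × ℕ) : ℝ :=
  1 / (((p.1 : ℝ) + 1) ^ (2 * i) * ((p.2 : ℝ) + 1) ^ (2 * k)
      * (((p.1 : ℝ) + 1) ^ 2 + ((p.2 : ℝ) + 1) ^ 2))

lemma G_nonneg (i k : ℕ) (p : ℕ × ℕ) : 0 ≤ G i k p := by
  unfold G; positivity

lemma G_swap (i k : ℕ) (p : ℕ × ℕ) : G i k p.swap = G k i p := by
  unfold G
  simp only [Prod.fst_swap, Prod.snd_swap]
  ring

lemma summable_G_left {i : ℕ} (hi : i ≠ 0) (k : ℕ) : Summable (G i k) := by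
  have h1 : Summable (fun n : ℕ => 1 / ((n : ℝ) + 1) ^ (2 * i)) := (Zsum hi).summable
  have h2 : Summable (fun n : ℕ => 1 / ((n : ℝ) + 1) ^ (2 * (k + 1))) :=
    (Zsum (Nat.succ_ne_zero k)).summable
  have h3 := h1.mul_of_nonneg h2 (fun n => by positivity) (fun n => by positivity)
  apply Summable.of_nonneg_of_le (G_nonneg i k) _ h3
  intro p
  set x : ℝ := (p.1 : ℝ) + 1 with hx
  set y : ℝ := (p.2 : ℝ) + 1 with hy
  have hx0 : 0 < x := by positivity
  have hy0 : 0 < y := by positivity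
  have hstep : G i k p ≤ 1 / (x ^ (2 * i) * y ^ (2 * (k + 1))) := by
    unfold G
    apply one_div_le_one_div_of_le (by positivity)
    have : y ^ (2 * (k + 1)) = y ^ (2 * k) * y ^ 2 := by ring
    rw [this, ← mul_assoc]
    have h4 : y ^ 2 ≤ x ^ 2 + y ^ 2 := by nlinarith
    exact mul_le_mul_of_nonneg_left h4 (by positivity)
  calc G i k p ≤ 1 / (x ^ (2 * i) * y ^ (2 * (k + 1))) := hstep
    _ = 1 / x ^ (2 * i) * (1 / y ^ (2 * (k + 1))) := by rw [one_div_mul_one_div]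

lemma summable_G {i k : ℕ} (h : i ≠ 0 ∨ k ≠ 0) : Summable (G i k) := by
  rcases h with hi | hk
  · exact summable_G_left hi k
  · have := summable_G_left hk i
    have h2 : Summable ((G k i) ∘ (Equiv.prodComm ℕ ℕ)) := by
      rwa [(Equiv.prodComm ℕ ℕ).summable_iff]
    have h3 : ((G k i) ∘ (Equiv.prodComm ℕ ℕ)) = G i k := by
      funext p
      simp only [Function.comp_apply, Equiv.prodComm_apply]
      exact G_swap k i p
    rwa [h3] at h2

lemma tsum_G_swap (i k : ℕ) : ∑' p : ℕ × ℕ, G i k p = ∑' p : ℕ × ℕ, G k i p := by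
  rw [← (Equiv.prodComm ℕ ℕ).tsum_eq (G i k)]
  congr 1
  funext p
  simp only [Equiv.prodComm_apply]
  exact G_swap i k p

set_option maxHeartbeats 1000000 in
lemma hasSum_prod_zeta {i k : ℕ} (hi : i ≠ 0) (hk : k ≠ 0) :
    HasSum (fun p : ℕ × ℕ => 1 / ((p.1 : ℝ) + 1) ^ (2 * i) * (1 / ((p.2 : ℝ) + 1) ^ (2 * k)))
      (ZV i * ZV k) := by
  have hf := Zsum hi
  have hg := Zsum hk
  have hs : Summable (fun p : ℕ × ℕ =>
      (1 / ((p.1 : ℝ) + 1) ^ (2 * i)) * (1 / ((p.2 : ℝ) + 1) ^ (2 * k))) :=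
    hf.summable.mul_of_nonneg hg.summable (fun n => by positivity) (fun n => by positivity)
  exact hf.mul hg hs

lemma G_rec (i k : ℕ) (p : ℕ × ℕ) :
    G (i + 1) k p = 1 / ((p.1 : ℝ) + 1) ^ (2 * (i + 1)) * (1 / ((p.2 : ℝ) + 1) ^ (2 * (k + 1)))
      - G i (k + 1) p := by
  unfold G
  set x : ℝ := (p.1 : ℝ) + 1 with hx
  set y : ℝ := (p.2 : ℝ) + 1 with hy
  have hx0 : (0:ℝ) < x := by positivity
  have hy0 : (0:ℝ) < y := by positivity
  have hs : (0:ℝ) < x ^ 2 + y ^ 2 := by positivity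
  field_simp
  ring

lemma hasSum_G_rec (i k : ℕ) :
    HasSum (G (i + 1) k)
      (ZV (i + 1) * ZV (k + 1) - ∑' p : ℕ × ℕ, G i (k + 1) p) := by
  have h1 := hasSum_prod_zeta (Nat.succ_ne_zero i) (Nat.succ_ne_zero k)
  have h2 : Summable (G i (k + 1)) := summable_G (Or.inr (Nat.succ_ne_zero k))
  have h3 := h1.sub h2.hasSum
  convert h3 using 1
  · rfl
  funext p
  exact G_rec i k p

lemma Ipow (l : ℕ) : (Complex.I) ^ (4 * l + 3) = -Complex.I := by
  rw [pow_add, pow_mul]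
  have h4 : Complex.I ^ 4 = 1 := by
    rw [show (4:ℕ) = 2*2 by norm_num, pow_mul, Complex.I_sq]
    norm_num
  have h3 : Complex.I ^ 3 = -Complex.I := by
    rw [show (3:ℕ) = 2+1 by norm_num, pow_add, Complex.I_sq]
    ring
  rw [h4, h3, one_pow, one_mul]

lemma term_eq (l p q : ℕ) (hp : 1 ≤ p) (hq : 1 ≤ q) (hpq : p + q = 2 * l + 2) :
    (1 / 2) * (2 * (π : ℂ) * Complex.I) ^ (4 * l + 3) *
        ((-1 : ℂ) ^ (p + 1) * ((bernoulli (2 * p) : ℂ) / (Nat.factorial (2 * p) : ℂ))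
          * ((bernoulli (2 * q) : ℂ) / (Nat.factorial (2 * q) : ℂ)))
      = (Complex.I * (1 / (π : ℂ))) * ((-1 : ℂ) ^ p * (((ZV p : ℝ) : ℂ) * ((ZV q : ℝ) : ℂ))) := by
  obtain ⟨p', rfl⟩ : ∃ p', p = p' + 1 := ⟨p - 1, by omega⟩
  obtain ⟨q', rfl⟩ : ∃ q', q = q' + 1 := ⟨q - 1, by omega⟩
  unfold ZV
  rw [show 2 * (p' + 1) - 1 = 2 * p' + 1 by omega, show 2 * (q' + 1) - 1 = 2 * q' + 1 by omega]
  rw [mul_pow, mul_pow, Ipow]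
  have hπ : (π : ℂ) ≠ 0 := by exact_mod_cast Real.pi_ne_zero
  have hf1 : ((Nat.factorial (2 * (p' + 1)) : ℂ)) ≠ 0 := Nat.cast_ne_zero.mpr (Nat.factorial_ne_zero _)
  have hf2 : ((Nat.factorial (2 * (q' + 1)) : ℂ)) ≠ 0 := Nat.cast_ne_zero.mpr (Nat.factorial_ne_zero _)
  push_cast
  have hl : p' + q' = 2 * l := by omega
  rcases Nat.even_or_odd p' with ⟨a, ha⟩ | ⟨a, ha⟩
  · obtain ⟨b, hb⟩ : ∃ b, q' = b + b := ⟨l - a, by omega⟩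
    subst ha hb
    have e1 : (-1 : ℂ) ^ (a + a + 1 + 1) = 1 := Even.neg_one_pow ⟨a + 1, by ring⟩
    have e2 : (-1 : ℂ) ^ (a + a + 1) = -1 := Odd.neg_one_pow ⟨a, by ring⟩
    have e3 : (-1 : ℂ) ^ (b + b + 1 + 1) = 1 := Even.neg_one_pow ⟨b + 1, by ring⟩
    rw [show 4 * l + 3 = 2 * (a + a) + 2 * (b + b) + 3 by omega]
    rw [e1, e2, e3]
    field_simp
    ring
  · obtain ⟨b, hb⟩ : ∃ b, q' = 2 * b + 1 := ⟨l - a - 1, by omega⟩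
    subst ha hb
    have e1 : (-1 : ℂ) ^ (2 * a + 1 + 1 + 1) = -1 := Odd.neg_one_pow ⟨a + 1, by ring⟩
    have e2 : (-1 : ℂ) ^ (2 * a + 1 + 1) = 1 := Even.neg_one_pow ⟨a + 1, by ring⟩
    have e3 : (-1 : ℂ) ^ (2 * b + 1 + 1 + 1) = -1 := Odd.neg_one_pow ⟨b + 1, by ring⟩
    rw [show 4 * l + 3 = 2 * (2 * a + 1) + 2 * (2 * b + 1) + 3 by omega]
    rw [e1, e2, e3]
    field_simp
    ring

lemma end_eq (l : ℕ) :
    -Complex.I * (((ZV (2 * l + 2) : ℝ) : ℂ) / (π : ℂ))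
      = (1 / 2) * (2 * (π : ℂ) * Complex.I) ^ (4 * l + 3) *
          (-2 * ((bernoulli (2 * (2 * l + 2)) : ℂ) / (Nat.factorial (2 * (2 * l + 2)) : ℂ))) := by
  unfold ZV
  rw [show 2 * (2 * l + 2) - 1 = 4 * l + 3 by omega]
  rw [mul_pow, mul_pow, Ipow]
  have hπ : (π : ℂ) ≠ 0 := by exact_mod_cast Real.pi_ne_zero
  have hf1 : ((Nat.factorial (2 * (2 * l + 2)) : ℂ)) ≠ 0 := Nat.cast_ne_zero.mpr (Nat.factorial_ne_zero _)
  push_cast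
  have e1 : (-1 : ℂ) ^ (2 * l + 2 + 1) = -1 := Odd.neg_one_pow ⟨l + 1, by ring⟩
  rw [e1, show 2 * (2 * l + 2) = 4 * l + 3 + 1 by omega, pow_succ (π : ℂ) (4 * l + 3)]
  rw [← mul_div_assoc, div_eq_iff hπ]
  field_simp


/-- For even r ≥ 2,
Σ_{n≥1} cot(πni)/n^{2r−1}
  = (1/2)(2πi)^{2r−1} Σ_{m=0}^{r} (−1)^{m+1} B_{2m}/(2m)! · B_{2(r−m)}/(2(r−m))!. -/
theorem cot_pi_n_i_series
    (r : ℕ) (hr : 2 ≤ r) (hreven : Even r) :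
    ∑' n : ℕ, Complex.cot ((Real.pi : ℂ) * (n + 1) * Complex.I) / ((n : ℂ) + 1) ^ (2 * r - 1)
      = (1 / 2) * (2 * (Real.pi : ℂ) * Complex.I) ^ (2 * r - 1) *
          ∑ m ∈ Finset.range (r + 1),
            (-1 : ℂ) ^ (m + 1) * ((bernoulli (2 * m) : ℂ) / (Nat.factorial (2 * m) : ℂ)) *
              ((bernoulli (2 * (r - m)) : ℂ) / (Nat.factorial (2 * (r - m)) : ℂ)) := by

  obtain ⟨l, rfl⟩ : ∃ l, r = 2 * l + 2 := by
    obtain ⟨m, hm⟩ := hreven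
    exact ⟨m - 1, by omega⟩
  clear hr hreven
  have hπ : (π : ℝ) ≠ 0 := Real.pi_ne_zero
  have hπC : (π : ℂ) ≠ 0 := by exact_mod_cast hπ
  -- the double sums
  set W : ℕ → ℝ := fun j => ∑' p : ℕ × ℕ, G j (2 * l + 1 - j) p with hWdef
  have hrec : ∀ i, i ≤ 2 * l → W (i + 1) = ZV (i + 1) * ZV (2 * l + 1 - i) - W i := by
    intro i hi
    have h := hasSum_G_rec i (2 * l - i)
    rw [show 2 * l - i + 1 = 2 * l + 1 - i by omega] at h
    have h2 : W (i + 1) = ∑' p : ℕ × ℕ, G (i + 1) (2 * l - i) p := by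
      rw [hWdef]
      simp only []
      rw [show 2 * l + 1 - (i + 1) = 2 * l - i by omega]
    rw [h2, h.tsum_eq, hWdef]
  have htel := Finset.sum_range_sub (fun j => (-1 : ℝ) ^ j * W j) (2 * l + 1)
  have hterm : ∀ i ∈ Finset.range (2 * l + 1),
      (-1 : ℝ) ^ (i + 1) * W (i + 1) - (-1 : ℝ) ^ i * W i
        = (-1 : ℝ) ^ (i + 1) * (ZV (i + 1) * ZV (2 * l + 1 - i)) := by
    intro i hi
    have hi' := Finset.mem_range.mp hi
    rw [hrec i (by omega)]
    ring
  rw [Finset.sum_congr rfl hterm] at htel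
  have hsym : W 0 = W (2 * l + 1) := by
    rw [hWdef]
    simp only []
    rw [show 2 * l + 1 - 0 = 2 * l + 1 by omega, show 2 * l + 1 - (2 * l + 1) = 0 by omega]
    exact tsum_G_swap 0 (2 * l + 1)
  have hW21 : W (2 * l + 1) = -(1 / 2) * ∑ i ∈ Finset.range (2 * l + 1),
      (-1 : ℝ) ^ (i + 1) * (ZV (i + 1) * ZV (2 * l + 1 - i)) := by
    have hodd : ((-1 : ℝ)) ^ (2 * l + 1) = -1 := Odd.neg_one_pow ⟨l, by ring⟩
    rw [hodd, pow_zero, one_mul, hsym] at htel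
    linarith [htel]
  -- fiberwise summation
  have hGsum : Summable (G (2 * l + 1) 0) := summable_G (Or.inl (Nat.succ_ne_zero _))
  have hfib : ∀ n : ℕ, HasSum (fun m : ℕ => G (2 * l + 1) 0 (n, m))
      (1 / ((n : ℝ) + 1) ^ (2 * (2 * l + 1)) *
        (π * CothV ((n : ℝ) + 1) / (2 * ((n : ℝ) + 1)) - 1 / (2 * ((n : ℝ) + 1) ^ 2))) := by
    intro n
    have h := (hasSum_nat_inv_sq_add ((n : ℝ) + 1) (by positivity)).mul_left
      (1 / ((n : ℝ) + 1) ^ (2 * (2 * l + 1)))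
    convert h using 1
    · rfl
    funext m
    unfold G
    norm_num [mul_comm]
  have hWfib : HasSum (fun n : ℕ => 1 / ((n : ℝ) + 1) ^ (2 * (2 * l + 1)) *
      (π * CothV ((n : ℝ) + 1) / (2 * ((n : ℝ) + 1)) - 1 / (2 * ((n : ℝ) + 1) ^ 2)))
      (W (2 * l + 1)) := by
    have hWeq : W (2 * l + 1) = ∑' p : ℕ × ℕ, G (2 * l + 1) 0 p := by
      rw [hWdef]
      simp only []
      rw [show 2 * l + 1 - (2 * l + 1) = 0 by omega]
    rw [hWeq]
    exact HasSum.prod_fiberwise hGsum.hasSum hfib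
  -- the single sum
  have hS : HasSum (fun n : ℕ => CothV ((n : ℝ) + 1) / ((n : ℝ) + 1) ^ (4 * l + 3))
      (ZV (2 * l + 2) / π + 2 / π * W (2 * l + 1)) := by
    have h1 := (Zsum (k := 2 * l + 2) (by omega)).mul_left (1 / π)
    have h2 := hWfib.mul_left (2 / π)
    have h3 := h1.add h2
    have heq : (fun n : ℕ => 1 / π * (1 / ((n : ℝ) + 1) ^ (2 * (2 * l + 2)))
        + 2 / π * (1 / ((n : ℝ) + 1) ^ (2 * (2 * l + 1)) *
          (π * CothV ((n : ℝ) + 1) / (2 * ((n : ℝ) + 1)) - 1 / (2 * ((n : ℝ) + 1) ^ 2))))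
        = fun n : ℕ => CothV ((n : ℝ) + 1) / ((n : ℝ) + 1) ^ (4 * l + 3) := by
      funext n
      have hx : (0 : ℝ) < (n : ℝ) + 1 := by positivity
      have hX : ((n : ℝ) + 1) ^ (2 * (2 * l + 1)) ≠ 0 := by positivity
      rw [show 2 * (2 * l + 2) = 2 * (2 * l + 1) + 2 by omega,
        show 4 * l + 3 = 2 * (2 * l + 1) + 1 by omega, pow_add, pow_add, pow_one]
      field_simp
      ring
    rw [heq] at h3
    have hval : 1 / π * ZV (2 * l + 2) + 2 / π * W (2 * l + 1)
        = ZV (2 * l + 2) / π + 2 / π * W (2 * l + 1) := by ring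
    rw [hval] at h3
    exact h3
  -- to ℂ
  have hC : HasSum (fun n : ℕ => Complex.cot ((Real.pi : ℂ) * (n + 1) * Complex.I)
        / ((n : ℂ) + 1) ^ (2 * (2 * l + 2) - 1))
      (-Complex.I * ((ZV (2 * l + 2) / π + 2 / π * W (2 * l + 1) : ℝ) : ℂ)) := by
    have h := (Complex.hasSum_ofReal.mpr hS).mul_left (-Complex.I)
    convert h using 1
    · rfl
    funext n
    have hx : (0 : ℝ) < (n : ℝ) + 1 := by positivity
    have hcot := cot_eq_cothV ((n : ℝ) + 1) hx
    push_cast at hcot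
    rw [show (2 * (2 * l + 2) - 1 : ℕ) = 4 * l + 3 by omega]
    rw [hcot]
    push_cast
    ring
  rw [hC.tsum_eq, hW21]
  -- final algebra
  have hdecomp : ∀ g : ℕ → ℂ, ∑ m ∈ Finset.range (2 * l + 2 + 1), g m
      = (∑ i ∈ Finset.range (2 * l + 1), g (i + 1)) + g (2 * l + 2) + g 0 := by
    intro g
    rw [Finset.sum_range_succ, show (2 * l + 2 : ℕ) = 2 * l + 1 + 1 by omega,
      Finset.sum_range_succ', Finset.sum_range_succ]
    ring
  rw [hdecomp]
  rw [show (2 * (2 * l + 2) - 1 : ℕ) = 4 * l + 3 by omega]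
  have key : ∀ i ∈ Finset.range (2 * l + 1),
      (1 / 2) * (2 * (π : ℂ) * Complex.I) ^ (4 * l + 3) *
        ((-1 : ℂ) ^ (i + 1 + 1) * ((bernoulli (2 * (i + 1)) : ℂ) / (Nat.factorial (2 * (i + 1)) : ℂ))
          * ((bernoulli (2 * (2 * l + 2 - (i + 1))) : ℂ) / (Nat.factorial (2 * (2 * l + 2 - (i + 1))) : ℂ)))
      = (Complex.I * (1 / (π : ℂ))) *
          ((-1 : ℂ) ^ (i + 1) * (((ZV (i + 1) : ℝ) : ℂ) * ((ZV (2 * l + 1 - i) : ℝ) : ℂ))) := by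
    intro i hi
    have hi' := Finset.mem_range.mp hi
    rw [show 2 * l + 2 - (i + 1) = 2 * l + 1 - i by omega]
    exact term_eq l (i + 1) (2 * l + 1 - i) (by omega) (by omega) (by omega)
  have h2top : (-1 : ℂ) ^ (2 * l + 2 + 1)
        * ((bernoulli (2 * (2 * l + 2)) : ℂ) / (Nat.factorial (2 * (2 * l + 2)) : ℂ))
        * ((bernoulli (2 * (2 * l + 2 - (2 * l + 2))) : ℂ) / (Nat.factorial (2 * (2 * l + 2 - (2 * l + 2))) : ℂ))
      = -((bernoulli (2 * (2 * l + 2)) : ℂ) / (Nat.factorial (2 * (2 * l + 2)) : ℂ)) := by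
    rw [Nat.sub_self, mul_zero]
    have hodd : (-1 : ℂ) ^ (2 * l + 2 + 1) = -1 := Odd.neg_one_pow ⟨l + 1, by ring⟩
    rw [hodd]
    norm_num
  have h20 : (-1 : ℂ) ^ (0 + 1)
        * ((bernoulli (2 * 0) : ℂ) / (Nat.factorial (2 * 0) : ℂ))
        * ((bernoulli (2 * (2 * l + 2 - 0)) : ℂ) / (Nat.factorial (2 * (2 * l + 2 - 0)) : ℂ))
      = -((bernoulli (2 * (2 * l + 2)) : ℂ) / (Nat.factorial (2 * (2 * l + 2)) : ℂ)) := by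
    rw [Nat.sub_zero, mul_zero]
    norm_num
  have hkey_sum : (1 / 2) * (2 * (π : ℂ) * Complex.I) ^ (4 * l + 3) *
      (∑ i ∈ Finset.range (2 * l + 1),
        (-1 : ℂ) ^ (i + 1 + 1) * ((bernoulli (2 * (i + 1)) : ℂ) / (Nat.factorial (2 * (i + 1)) : ℂ))
          * ((bernoulli (2 * (2 * l + 2 - (i + 1))) : ℂ) / (Nat.factorial (2 * (2 * l + 2 - (i + 1))) : ℂ)))
      = (Complex.I * (1 / (π : ℂ))) * ∑ i ∈ Finset.range (2 * l + 1),
          ((-1 : ℂ) ^ (i + 1) * (((ZV (i + 1) : ℝ) : ℂ) * ((ZV (2 * l + 1 - i) : ℝ) : ℂ))) := by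
    rw [Finset.mul_sum, Finset.mul_sum]
    exact Finset.sum_congr rfl key
  have hend := end_eq l
  push_cast at hkey_sum hend h2top h20 ⊢
  linear_combination (-1 : ℂ) * hkey_sum + hend
    - ((1 : ℂ) / 2 * (2 * (π : ℂ) * Complex.I) ^ (4 * l + 3)) * h2top
    - ((1 : ℂ) / 2 * (2 * (π : ℂ) * Complex.I) ^ (4 * l + 3)) * h20

end CotAux
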